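/- Let X be a Tychonoff space, λ a bornology on X with a closed base, and (Y,ρ) a metric space. If X is functionally generated with respect to Y by the family σλ, then C_{λ,ρ}(X,Y) is Dieudonné complete. -/

import Mathlib

open Filter Topology Set

universe u v

/-- A space is Dieudonné complete if it embeds as a closed subspace of a
product of metric spaces. -/
def DieudonneComplete (X : Type u) [TopologicalSpace X] : Prop :=
  ∃ (ι : Type u) (M : ι → Type u) (m : ∀ i, MetricSpace (M i)) (f : X → ∀ i, M i),
    letI : ∀ i, TopologicalSpace (M i) := fun i => (m i).toUniformSpace.toTopologicalSpace
    Topology.IsClosedEmbedding f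

/-- A bornology (family of nonempty sets covering X, closed under finite unions and
nonempty subsets) which is moreover closed under taking closures (has a closed base). -/
def IsBornologyWithClosedBase {X : Type u} [TopologicalSpace X] (L : Set (Set X)) : Prop :=
  (∀ A ∈ L, A.Nonempty) ∧ (⋃₀ L = univ) ∧ (∀ A ∈ L, ∀ B ∈ L, A ∪ B ∈ L) ∧
    (∀ A ∈ L, ∀ B : Set X, B.Nonempty → B ⊆ A → B ∈ L) ∧ (∀ A ∈ L, closure A ∈ L)

/-- X is functionally generated by the family μ with respect to Y if for every
discontinuous f : X → Y there is A ∈ μ such that f|A extends to no continuous map X → Y. -/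
def FunctionallyGenerated (X : Type u) [TopologicalSpace X] (μ : Set (Set X))
    (Y : Type v) [TopologicalSpace Y] : Prop :=
  ∀ f : X → Y, ¬ Continuous f →
    ∃ A ∈ μ, ¬ ∃ g : X → Y, Continuous g ∧ ∀ x ∈ A, g x = f x

/-- σλ: the family of countable unions of members of L. -/
def sigmaFam {X : Type u} (L : Set (Set X)) : Set (Set X) :=
  {B | ∃ S : ℕ → Set X, (∀ n, S n ∈ L) ∧ B = ⋃ n, S n}

/-- C_{λ,ρ}(X,Y): the continuous maps from X to the metric space Y, carrying the
uniformity (hence topology) of uniform convergence on members of L. -/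
def CL (X : Type u) [TopologicalSpace X] (Y : Type v) [MetricSpace Y]
    (L : Set (Set X)) : Type (max u v) := C(X, Y)

noncomputable instance CL.instUniformSpace (X : Type u) [TopologicalSpace X] (Y : Type v)
    [MetricSpace Y] (L : Set (Set X)) : UniformSpace (CL X Y L) :=
  UniformSpace.comap (fun f => UniformOnFun.ofFun L (⇑(show C(X,Y) from f)))
    (UniformOnFun.uniformSpace X Y L)



/-- Functions `ι → Y` with the (truncated) sup metric. -/
def TS (ι : Type u) (Y : Type v) : Type (max u v) := ι → Y

namespace TS

variable {ι : Type u} {Y : Type v} [MetricSpace Y]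

noncomputable def tsdist (u v : TS ι Y) : ℝ := ⨆ i, min 1 (dist (u i) (v i))

lemma bdd (u v : TS ι Y) : BddAbove (Set.range fun i => min 1 (dist (u i) (v i))) := by
  refine ⟨1, ?_⟩
  rintro x ⟨i, rfl⟩
  exact min_le_left _ _

lemma tsdist_nonneg {u v : TS ι Y} : 0 ≤ tsdist u v :=
  Real.iSup_nonneg fun i => le_min zero_le_one dist_nonneg

lemma min_le_tsdist (u v : TS ι Y) (i : ι) : min 1 (dist (u i) (v i)) ≤ tsdist u v :=
  le_ciSup (bdd u v) i

lemma tsdist_le {u v : TS ι Y} {c : ℝ} (hc : 0 ≤ c) (h : ∀ i, dist (u i) (v i) ≤ c) :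
    tsdist u v ≤ c :=
  Real.iSup_le (fun i => le_trans (min_le_right _ _) (h i)) hc

lemma dist_apply_lt {u v : TS ι Y} {ε : ℝ} (h : tsdist u v < min ε 1) (i : ι) :
    dist (u i) (v i) < ε := by
  have h1 : min 1 (dist (u i) (v i)) < min ε 1 := lt_of_le_of_lt (min_le_tsdist u v i) h
  rcases le_or_gt (dist (u i) (v i)) 1 with hd | hd
  · have : min 1 (dist (u i) (v i)) = dist (u i) (v i) := min_eq_right hd
    rw [this] at h1
    exact lt_of_lt_of_le h1 (min_le_left _ _)
  · exfalso
    rw [min_eq_left hd.le] at h1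
    exact absurd (lt_of_lt_of_le h1 (min_le_right _ _)) (lt_irrefl 1)

private lemma min1_add {a b c : ℝ} (hb : 0 ≤ b) (hc : 0 ≤ c) (h : a ≤ b + c) :
    min 1 a ≤ min 1 b + min 1 c := by
  rcases le_or_gt 1 b with hb1 | hb1
  · calc min 1 a ≤ 1 := min_le_left _ _
    _ = min 1 b := (min_eq_left hb1).symm
    _ ≤ min 1 b + min 1 c := le_add_of_nonneg_right (le_min zero_le_one hc)
  · rcases le_or_gt 1 c with hc1 | hc1
    · calc min 1 a ≤ 1 := min_le_left _ _
      _ = min 1 c := (min_eq_left hc1).symm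
      _ ≤ min 1 b + min 1 c := le_add_of_nonneg_left (le_min zero_le_one hb)
    · calc min 1 a ≤ a := min_le_right _ _
      _ ≤ b + c := h
      _ = min 1 b + min 1 c := by rw [min_eq_right hb1.le, min_eq_right hc1.le]

noncomputable instance instMetricSpace : MetricSpace (TS ι Y) where
  dist := tsdist
  dist_self u := le_antisymm
    (Real.iSup_le (fun i => by simp) le_rfl)
    (Real.iSup_nonneg fun i => le_min zero_le_one dist_nonneg)
  dist_comm u v := by
    unfold tsdist
    simp_rw [dist_comm]
  dist_triangle u v w := by
    refine Real.iSup_le (fun i => ?_) (add_nonneg tsdist_nonneg tsdist_nonneg)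
    exact le_trans (min1_add dist_nonneg dist_nonneg (dist_triangle _ _ _))
      (add_le_add (min_le_tsdist u v i) (min_le_tsdist v w i))
  eq_of_dist_eq_zero := by
    intro u v h
    funext i
    have h1 : min 1 (dist (u i) (v i)) ≤ 0 := h ▸ min_le_tsdist u v i
    have h2 : dist (u i) (v i) ≤ 0 := by
      by_contra h'
      push_neg at h'
      exact absurd (lt_of_lt_of_le (lt_min one_pos h') h1) (by norm_num)
    exact eq_of_dist_eq_zero (le_antisymm h2 dist_nonneg)

lemma dist_eq (u v : TS ι Y) : dist u v = ⨆ i, min 1 (dist (u i) (v i)) := rfl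

lemma dist_le {u v : TS ι Y} {c : ℝ} (hc : 0 ≤ c) (h : ∀ i, dist (u i) (v i) ≤ c) :
    dist u v ≤ c := tsdist_le hc h

lemma dist_lt_apply {u v : TS ι Y} {ε : ℝ} (h : dist u v < min ε 1) (i : ι) :
    dist (u i) (v i) < ε := dist_apply_lt h i

lemma continuous_eval (i : ι) : Continuous (fun u : TS ι Y => u i) := by
  rw [Metric.continuous_iff]
  intro u ε hε
  refine ⟨min ε 1, lt_min hε one_pos, fun v hv => ?_⟩
  exact dist_apply_lt hv i

end TS


section Aux
open Uniformity

variable {X : Type u} [TopologicalSpace X] {Y : Type u} [MetricSpace Y] {L : Set (Set X)}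

/-- Underlying function of an element of `CL`. -/
def CL.ap (u : CL X Y L) : X → Y := (show C(X,Y) from u)

lemma CL.ap_continuous (u : CL X Y L) : Continuous (CL.ap u) :=
  (show C(X,Y) from u).continuous

/-- Restriction to `A`, as a map into the truncated-sup-metric function space. -/
noncomputable def Phi (A : Set X) (u : CL X Y L) : TS ↥A Y := fun a => CL.ap u a.1

lemma CL.hasBasis_nhds (hLne : L.Nonempty) (hdir : DirectedOn (· ⊆ ·) L) (u : CL X Y L) :
    (𝓝 u).HasBasis (fun Aε : Set X × ℝ => Aε.1 ∈ L ∧ 0 < Aε.2)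
      (fun Aε => {v : CL X Y L | ∀ x ∈ Aε.1, dist (CL.ap u x) (CL.ap v x) < Aε.2}) := by
  have hu : (𝓤 (CL X Y L)).HasBasis (fun Aε : Set X × ℝ => Aε.1 ∈ L ∧ 0 < Aε.2)
      (fun Aε => {uv : CL X Y L × CL X Y L |
        ∀ x ∈ Aε.1, dist (CL.ap uv.1 x) (CL.ap uv.2 x) < Aε.2}) := by
    exact (UniformOnFun.hasBasis_uniformity_of_basis X Y L hLne hdir
      Metric.uniformity_basis_dist).comap
      (Prod.map (fun f : CL X Y L => UniformOnFun.ofFun L (CL.ap f))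
        (fun f : CL X Y L => UniformOnFun.ofFun L (CL.ap f)))
  exact nhds_basis_uniformity' hu

lemma continuous_Phi (hLne : L.Nonempty) (hdir : DirectedOn (· ⊆ ·) L) {A : Set X}
    (hA : A ∈ L) : Continuous (Phi A : CL X Y L → TS ↥A Y) := by
  rw [continuous_iff_continuousAt]
  intro u
  rw [ContinuousAt, Metric.tendsto_nhds]
  intro ε hε
  rw [(CL.hasBasis_nhds hLne hdir u).eventually_iff]
  refine ⟨(A, ε/2), ⟨hA, half_pos hε⟩, fun v hv => ?_⟩
  refine lt_of_le_of_lt (TS.dist_le (le_of_lt (half_pos hε)) fun a => ?_) (half_lt_self hε)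
  rw [dist_comm]
  exact le_of_lt (hv a.1 a.2)

end Aux


section Aux2
open Uniformity

variable {X : Type u} [TopologicalSpace X] {Y : Type u} [MetricSpace Y] {L : Set (Set X)}

/-- Restriction of a bare function, as element of the sup-metric space. -/
noncomputable def restf (f : X → Y) (A : Set X) : TS ↥A Y := fun a => f a.1

/-- `min ((1/2)^n) (sup-dist on T n between u and f)`. -/
noncomputable def dnn (T : ℕ → Set X) (f : X → Y) (n : ℕ) (u : CL X Y L) : ℝ :=
  min ((1/2 : ℝ)^n) (dist (Phi (T n) u) (restf f (T n)))

noncomputable def Dfin (T : ℕ → Set X) (f : X → Y) : ℕ → CL X Y L → ℝ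
  | 0 => dnn T f 0
  | n+1 => fun u => max (Dfin T f n u) (dnn T f (n+1) u)

noncomputable def DD (T : ℕ → Set X) (f : X → Y) (u : CL X Y L) : ℝ := ⨆ n, dnn T f n u

variable {T : ℕ → Set X} {f : X → Y}

lemma dnn_nonneg (n : ℕ) (u : CL X Y L) : 0 ≤ dnn T f n u :=
  le_min (by positivity) dist_nonneg

lemma dnn_le_pow (n : ℕ) (u : CL X Y L) : dnn T f n u ≤ (1/2 : ℝ)^n := min_le_left _ _

lemma dnn_bdd (u : CL X Y L) : BddAbove (Set.range fun n => dnn T f n u) := by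
  refine ⟨1, ?_⟩
  rintro x ⟨n, rfl⟩
  exact le_trans (dnn_le_pow n u) (pow_le_one₀ (by norm_num) (by norm_num))

lemma dnn_le_DD (n : ℕ) (u : CL X Y L) : dnn T f n u ≤ DD T f u := le_ciSup (dnn_bdd u) n

lemma DD_nonneg (u : CL X Y L) : 0 ≤ DD T f u := le_trans (dnn_nonneg 0 u) (dnn_le_DD 0 u)

lemma dnn_le_Dfin {n m : ℕ} (h : n ≤ m) (u : CL X Y L) : dnn T f n u ≤ Dfin T f m u := by
  induction m with
  | zero => rw [Nat.le_zero] at h; subst h; exact le_rfl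
  | succ m ih =>
    rcases Nat.le_succ_iff.mp h with h' | h'
    · exact le_trans (ih h') (le_max_left _ _)
    · subst h'; exact le_max_right _ _

lemma Dfin_le_DD (m : ℕ) (u : CL X Y L) : Dfin T f m u ≤ DD T f u := by
  induction m with
  | zero => exact dnn_le_DD 0 u
  | succ m ih => exact max_le ih (dnn_le_DD (m+1) u)

lemma Dfin_nonneg (m : ℕ) (u : CL X Y L) : 0 ≤ Dfin T f m u :=
  le_trans (dnn_nonneg 0 u) (dnn_le_Dfin (Nat.zero_le m) u)

lemma DD_le_Dfin_add (m : ℕ) (u : CL X Y L) : DD T f u ≤ Dfin T f m u + (1/2 : ℝ)^m := by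
  refine Real.iSup_le (fun n => ?_) (add_nonneg (Dfin_nonneg m u) (by positivity))
  rcases le_or_gt n m with h | h
  · exact le_trans (dnn_le_Dfin h u) (le_add_of_nonneg_right (by positivity))
  · refine le_trans (dnn_le_pow n u) ?_
    refine le_trans (pow_le_pow_of_le_one (by norm_num) (by norm_num) h.le) ?_
    exact le_add_of_nonneg_left (Dfin_nonneg m u)

lemma dnn_continuous (hLne : L.Nonempty) (hdir : DirectedOn (· ⊆ ·) L)
    (hT : ∀ n, T n ∈ L) (n : ℕ) : Continuous (dnn (L := L) T f n) :=
  continuous_const.min ((continuous_Phi hLne hdir (hT n)).dist continuous_const)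

lemma Dfin_continuous (hLne : L.Nonempty) (hdir : DirectedOn (· ⊆ ·) L)
    (hT : ∀ n, T n ∈ L) (m : ℕ) : Continuous (Dfin (L := L) T f m) := by
  induction m with
  | zero => exact dnn_continuous hLne hdir hT 0
  | succ m ih => exact ih.max (dnn_continuous hLne hdir hT (m+1))

lemma DD_continuous (hLne : L.Nonempty) (hdir : DirectedOn (· ⊆ ·) L)
    (hT : ∀ n, T n ∈ L) : Continuous (DD (L := L) T f) := by
  have htu : TendstoUniformly (fun m => Dfin (L := L) T f m) (DD T f) atTop := by
    rw [Metric.tendstoUniformly_iff]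
    intro ε hε
    obtain ⟨m₀, hm₀⟩ := exists_pow_lt_of_lt_one hε (by norm_num : (1/2 : ℝ) < 1)
    filter_upwards [eventually_ge_atTop m₀] with m hm u
    have h1 : Dfin T f m u ≤ DD T f u := Dfin_le_DD m u
    have h2 : DD T f u ≤ Dfin T f m u + (1/2 : ℝ)^m := DD_le_Dfin_add m u
    have h3 : (1/2 : ℝ)^m ≤ (1/2 : ℝ)^m₀ := pow_le_pow_of_le_one (by norm_num) (by norm_num) hm
    rw [Real.dist_eq, abs_of_nonneg (by linarith)]
    linarith
  exact htu.continuous (Eventually.of_forall (Dfin_continuous hLne hdir hT)).frequently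

end Aux2

section Emb
open Uniformity

variable (X : Type u) [TopologicalSpace X] (Y : Type u) [MetricSpace Y] (L : Set (Set X))

def IdxT : Type u := ↥L ⊕ C(CL X Y L, ℝ)

def MFam : IdxT X Y L → Type u := fun i =>
  match i with
  | Sum.inl A => TS ↥(A.1 : Set X) Y
  | Sum.inr _ => TS PUnit.{u+1} ℝ

noncomputable def mFam : ∀ i, MetricSpace (MFam X Y L i) := fun i =>
  match i with
  | Sum.inl _ => TS.instMetricSpace
  | Sum.inr _ => TS.instMetricSpace

noncomputable def EMB : CL X Y L → ∀ i, MFam X Y L i := fun u i =>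
  match i with
  | Sum.inl A => Phi A.1 u
  | Sum.inr θ => fun _ => θ u

noncomputable instance instMFamMet : ∀ i : IdxT X Y L, MetricSpace (MFam X Y L i) :=
  mFam X Y L

attribute [reducible] IdxT MFam

end Emb

/-- If X is functionally generated with respect to Y by σλ, then C_{λ,ρ}(X,Y)
is Dieudonné complete. -/
theorem dieudonneComplete_CL_of_functionallyGenerated (X : Type u) [TopologicalSpace X]
    [T35Space X] (Y : Type u) [MetricSpace Y] (L : Set (Set X))
    (hL : IsBornologyWithClosedBase L)
    (hX : FunctionallyGenerated X (sigmaFam L) Y) :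
    DieudonneComplete (CL X Y L) := by
  classical
  obtain ⟨hne, hcov, hunion, hhered, hclos⟩ := hL
  rcases isEmpty_or_nonempty X with hE | hNE
  · -- X is empty, so `CL X Y L` is a singleton
    set e0 : CL X Y L → ∀ i : PEmpty.{u+1}, PEmpty.elim i := fun _ i => PEmpty.elim i with he0
    refine ⟨PEmpty.{u+1}, fun i => PEmpty.elim i, fun i => PEmpty.elim i, e0, ?_⟩
    letI tM : ∀ i : PEmpty.{u+1}, TopologicalSpace (PEmpty.elim i) :=
      fun i => ((PEmpty.elim i : MetricSpace (PEmpty.elim i))).toUniformSpace.toTopologicalSpace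
    haveI hsub : Subsingleton (CL X Y L) :=
      ⟨fun a b => ContinuousMap.ext (f := (show C(X,Y) from a)) (g := (show C(X,Y) from b))
        fun x => (hE.elim x)⟩
    show Topology.IsClosedEmbedding e0
    haveI hsub2 : Subsingleton (∀ i : PEmpty.{u+1}, PEmpty.elim i) :=
      ⟨fun a b => funext fun i => PEmpty.elim i⟩
    refine ⟨⟨isInducing_iff_nhds.mpr fun a => ?_, fun a b _ => Subsingleton.elim a b⟩, ?_⟩
    · haveI : (comap e0 (𝓝 (e0 a))).NeBot :=
        comap_neBot_iff.mpr fun t ht => ⟨a, mem_of_mem_nhds ht⟩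
      rw [Filter.eq_top_of_neBot (𝓝 a), Filter.eq_top_of_neBot (comap e0 (𝓝 (e0 a)))]
    · have hc0 : Continuous (fun x : X => (hE.elim x : Y)) :=
        continuous_iff_continuousAt.mpr fun x => (hE.elim x)
      have hcl : range e0 = univ :=
        eq_univ_of_forall fun q =>
          ⟨(⟨fun x => hE.elim x, hc0⟩ : C(X,Y)), Subsingleton.elim _ _⟩
      rw [hcl]
      exact isClosed_univ
  · -- main case
    have hsing : ∀ x : X, {x} ∈ L := by
      intro x
      have hx : x ∈ ⋃₀ L := by rw [hcov]; exact mem_univ x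
      obtain ⟨A, hA, hxA⟩ := hx
      exact hhered A hA {x} (singleton_nonempty x) (singleton_subset_iff.mpr hxA)
    obtain ⟨x₀⟩ := hNE
    have hLne : L.Nonempty := ⟨{x₀}, hsing x₀⟩
    have hdir : DirectedOn (· ⊆ ·) L := fun A hA B hB =>
      ⟨A ∪ B, hunion A hA B hB, subset_union_left, subset_union_right⟩
    letI : ∀ i, MetricSpace (MFam X Y L i) := mFam X Y L
    have hecont : Continuous (EMB X Y L) := by
      refine continuous_pi fun i => ?_
      cases i with
      | inl A => exact continuous_Phi hLne hdir A.2
      | inr θ =>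
        rw [continuous_iff_continuousAt]
        intro u
        rw [ContinuousAt, Metric.tendsto_nhds]
        intro ε hε
        have h1 : ∀ᶠ v in 𝓝 u, dist (θ v) (θ u) < ε :=
          Metric.tendsto_nhds.mp (θ.continuous.tendsto u) ε hε
        filter_upwards [h1] with v hv
        exact lt_of_le_of_lt (TS.dist_le dist_nonneg fun _ => le_rfl) hv
    have hinj : Function.Injective (EMB X Y L) := by
      intro a b h
      have hx : ∀ x : X, CL.ap a x = CL.ap b x := by
        intro x
        exact congrFun (congrFun h (Sum.inl ⟨{x}, hsing x⟩)) ⟨x, rfl⟩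
      exact ContinuousMap.ext hx
    have hMain : Topology.IsClosedEmbedding (EMB X Y L) := by
      refine ⟨⟨isInducing_iff_nhds.mpr fun u => le_antisymm ?_ ?_, hinj⟩, ?_⟩
      · exact tendsto_iff_comap.mp (hecont.tendsto u)
      · intro s hs
        obtain ⟨⟨A, ε⟩, ⟨hA, hε⟩, hsub⟩ := (CL.hasBasis_nhds hLne hdir u).mem_iff.mp hs
        rw [mem_comap]
        refine ⟨(fun q => q (Sum.inl ⟨A, hA⟩)) ⁻¹'
          Metric.ball (EMB X Y L u (Sum.inl ⟨A, hA⟩)) (min ε 1), ?_, ?_⟩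
        · exact (continuous_apply (Sum.inl (⟨A, hA⟩ : ↥L))).continuousAt.preimage_mem_nhds
            (Metric.ball_mem_nhds _ (lt_min hε one_pos))
        · intro v hv
          refine hsub ?_
          intro x hx
          have h2 : dist (Phi A v) (Phi A u) < min ε 1 := hv
          have h3 := TS.dist_lt_apply h2 ⟨x, hx⟩
          rw [dist_comm]
          exact h3
      · refine isClosed_of_closure_subset fun p hp => ?_
        set F := comap (EMB X Y L) (𝓝 p) with hFdef
        haveI hFne : F.NeBot := by
          rw [hFdef, comap_neBot_iff]
          intro t ht
          obtain ⟨y, hyt, hyr⟩ := mem_closure_iff_nhds.mp hp t ht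
          obtain ⟨u, rfl⟩ := hyr
          exact ⟨u, hyt⟩
        have htendp : Tendsto (EMB X Y L) F (𝓝 p) := tendsto_comap
        have hcoord : ∀ i, Tendsto (fun u => EMB X Y L u i) F (𝓝 (p i)) :=
          fun i => ((continuous_apply i).tendsto p).comp htendp
        set f : X → Y := fun x => p (Sum.inl ⟨{x}, hsing x⟩) ⟨x, rfl⟩ with hfdef
        have hval : ∀ (A : ↥L) (x : X) (hx : x ∈ (A.1 : Set X)), p (Sum.inl A) ⟨x, hx⟩ = f x := by
          intro A x hx
          have h1 : Tendsto (fun u : CL X Y L => CL.ap u x) F (𝓝 (p (Sum.inl A) ⟨x, hx⟩)) :=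
            ((TS.continuous_eval ((⟨x, hx⟩ : ↥(A.1 : Set X)))).tendsto
              (p (Sum.inl A))).comp (hcoord (Sum.inl A))
          have h2 : Tendsto (fun u : CL X Y L => CL.ap u x) F
              (𝓝 (p (Sum.inl ⟨{x}, hsing x⟩) ⟨x, rfl⟩)) :=
            ((TS.continuous_eval ((⟨x, rfl⟩ : ↥({x} : Set X)))).tendsto
              (p (Sum.inl ⟨{x}, hsing x⟩))).comp (hcoord (Sum.inl ⟨{x}, hsing x⟩))
          exact tendsto_nhds_unique h1 h2
        have hunif : ∀ A ∈ L, ∀ ε : ℝ, 0 < ε →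
            ∀ᶠ u in F, ∀ x ∈ A, dist (CL.ap u x) (f x) < ε := by
          intro A hA ε hε
          have h1 : ∀ᶠ u in F,
              dist (EMB X Y L u (Sum.inl ⟨A, hA⟩)) (p (Sum.inl ⟨A, hA⟩)) < min ε 1 :=
            Metric.tendsto_nhds.mp (hcoord (Sum.inl ⟨A, hA⟩)) _ (lt_min hε one_pos)
          filter_upwards [h1] with u hu x hx
          have h3 := TS.dist_lt_apply hu ⟨x, hx⟩
          rw [hval ⟨A, hA⟩ x hx] at h3
          exact h3
        have hfc : Continuous f := by
          by_contra hnc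
          obtain ⟨B, hBmem, hbad⟩ := hX f hnc
          obtain ⟨S, hS, rfl⟩ := hBmem
          set V : ℕ → Set X := fun n => Nat.rec (S 0) (fun k Vk => Vk ∪ S (k+1)) n with hVdef
          have hVmem : ∀ n, V n ∈ L := by
            intro n
            induction n with
            | zero => exact hS 0
            | succ n ih => exact hunion _ ih _ (hS (n+1))
          have hSV : ∀ n, S n ⊆ V n := by
            intro n
            cases n with
            | zero => exact subset_rfl
            | succ n => exact subset_union_right
          have hVmono : Monotone V := monotone_nat_of_le_succ fun n => subset_union_left
          set T : ℕ → Set X := fun n => closure (V n) with hTdef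
          have hT : ∀ n, T n ∈ L := fun n => hclos _ (hVmem n)
          have hST : ∀ n, S n ⊆ T n := fun n => (hSV n).trans subset_closure
          have hTmono : Monotone T := fun a b hab => closure_mono (hVmono hab)
          have hDpos : ∀ u : CL X Y L, 0 < DD (L := L) T f u := by
            intro u
            rcases (DD_nonneg u).lt_or_eq with h | h
            · exact h
            exfalso
            have hzero : ∀ n, dnn (L := L) T f n u = 0 := fun n =>
              le_antisymm (h ▸ dnn_le_DD n u) (dnn_nonneg n u)
            have heq : ∀ n, ∀ x ∈ T n, CL.ap u x = f x := by
              intro n x hx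
              have h1 : dist (Phi (T n) u) (restf f (T n)) = 0 := by
                by_contra h'
                have hpos : 0 < dist (Phi (T n) u) (restf f (T n)) :=
                  lt_of_le_of_ne dist_nonneg (Ne.symm h')
                have h2 := hzero n
                simp only [dnn] at h2
                exact absurd h2 (lt_min (by positivity) hpos).ne'
              have h1' : Phi (T n) u = restf f (T n) := eq_of_dist_eq_zero h1
              exact congrFun h1' ⟨x, hx⟩
            refine hbad ⟨CL.ap u, CL.ap_continuous u, ?_⟩
            intro x hx
            obtain ⟨n, hn⟩ := mem_iUnion.mp hx
            exact heq n x (hST n hn)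
          have hDcont := DD_continuous (f := f) hLne hdir hT
          set θ₀ : C(CL X Y L, ℝ) :=
            ⟨fun u => (DD (L := L) T f u)⁻¹, hDcont.inv₀ fun u => (hDpos u).ne'⟩ with hθdef
          set c : ℝ := p (Sum.inr θ₀) PUnit.unit with hcdef
          have hub : ∀ᶠ u in F, (DD (L := L) T f u)⁻¹ < c + 1 := by
            have h1 : ∀ᶠ u in F,
                dist (EMB X Y L u (Sum.inr θ₀)) (p (Sum.inr θ₀)) < min 1 1 :=
              Metric.tendsto_nhds.mp (hcoord (Sum.inr θ₀)) _ (lt_min one_pos one_pos)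
            filter_upwards [h1] with u hu
            have h2 : dist ((DD (L := L) T f u)⁻¹) c < 1 := TS.dist_lt_apply hu PUnit.unit
            have h3 := (abs_sub_lt_iff.mp (by rw [← Real.dist_eq]; exact h2)).1
            linarith
          have hatTop : Tendsto (fun u => (DD (L := L) T f u)⁻¹) F atTop := by
            refine Tendsto.inv_tendsto_nhdsGT_zero ?_
            rw [tendsto_nhdsWithin_iff]
            constructor
            · rw [Metric.tendsto_nhds]
              intro ε hε
              obtain ⟨m, hm⟩ := exists_pow_lt_of_lt_one hε (by norm_num : (1/2 : ℝ) < 1)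
              filter_upwards [hunif (T m) (hT m) (ε/2) (half_pos hε)] with u hu
              have hDle : DD (L := L) T f u < ε := by
                have hle : DD (L := L) T f u ≤ max (ε/2) ((1/2 : ℝ)^m) := by
                  refine Real.iSup_le (fun n => ?_) (le_max_of_le_left (half_pos hε).le)
                  rcases le_or_gt n m with h | h
                  · refine le_max_of_le_left ?_
                    refine le_trans (min_le_right _ _) ?_
                    refine TS.dist_le (half_pos hε).le fun a => ?_
                    exact (hu a.1 (hTmono h a.2)).le
                  · exact le_max_of_le_right ((dnn_le_pow n u).trans
                      (pow_le_pow_of_le_one (by norm_num) (by norm_num) h.le))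
                exact lt_of_le_of_lt hle (max_lt (half_lt_self hε) hm)
              rw [Real.dist_0_eq_abs, abs_of_nonneg (DD_nonneg u)]
              exact hDle
            · exact Eventually.of_forall fun u => Set.mem_Ioi.mpr (hDpos u)
          obtain ⟨u, hu1, hu2⟩ := ((hatTop.eventually_gt_atTop (c + 1)).and hub).exists
          exact absurd hu1 (not_lt.mpr hu2.le)
        set fc : C(X, Y) := ⟨f, hfc⟩ with hfcdef
        have hFfc : Tendsto (fun u : CL X Y L => u) F (𝓝 (show CL X Y L from fc)) := by
          rw [(CL.hasBasis_nhds hLne hdir _).tendsto_right_iff]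
          rintro ⟨A, ε⟩ ⟨hA, hε⟩
          filter_upwards [hunif A hA ε hε] with u hu x hx
          rw [dist_comm]
          exact hu x hx
        refine ⟨(show CL X Y L from fc), ?_⟩
        funext i
        cases i with
        | inl A =>
          funext a
          exact (hval A a.1 a.2).symm
        | inr θ =>
          funext s
          have h1 : Tendsto (fun u : CL X Y L => θ u) F (𝓝 (θ (show CL X Y L from fc))) :=
            (θ.continuous.tendsto _).comp hFfc
          have h2 : Tendsto (fun u : CL X Y L => θ u) F (𝓝 (p (Sum.inr θ) s)) :=
            ((TS.continuous_eval s).tendsto _).comp (hcoord (Sum.inr θ))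
          exact tendsto_nhds_unique h1 h2

    refine ⟨IdxT X Y L, MFam X Y L, mFam X Y L, EMB X Y L, ?_⟩
    exact hMain
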